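/- For all t ∈ (0,1): t^{-3/2}(1-t)^{-1/2} · ((2-3t)·arcsin(√(1-t))/√(1-t) + (2-t)√t - π(1-t)) ≥ 0; equivalently (2-3t)·arcsin(√(1-t))/√(1-t) + (2-t)√t - π(1-t) ≥ 0 for t∈(0,1). -/

import Mathlib

open Real


noncomputable def Hfun (u : ℝ) : ℝ :=
  6 * Real.arcsin u + 4 * (u * Real.sqrt (1 - u ^ 2)) - 3 * π * u

noncomputable def Gfun (s : ℝ) : ℝ :=
  (3 * s ^ 2 - 1) * Real.arcsin s + s * (1 + s ^ 2) * Real.sqrt (1 - s ^ 2) - π * s ^ 3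

lemma sqrt_one_sub_sq_hasDerivAt {u : ℝ} (h1 : -1 < u) (h2 : u < 1) :
    HasDerivAt (fun u : ℝ => Real.sqrt (1 - u ^ 2)) (-u / Real.sqrt (1 - u ^ 2)) u := by
  have hpos : 0 < 1 - u ^ 2 := by nlinarith
  have hin : HasDerivAt (fun u : ℝ => 1 - u ^ 2) (-(2 * u)) u := by
    simpa using (hasDerivAt_pow 2 u).const_sub 1
  have := (Real.hasDerivAt_sqrt (ne_of_gt hpos)).comp u hin
  refine this.congr_deriv ?_
  have hs : Real.sqrt (1 - u ^ 2) ≠ 0 := by positivity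
  field_simp

lemma Hfun_hasDerivAt {u : ℝ} (h1 : -1 < u) (h2 : u < 1) :
    HasDerivAt Hfun ((10 - 8 * u ^ 2) / Real.sqrt (1 - u ^ 2) - 3 * π) u := by
  have hpos : 0 < 1 - u ^ 2 := by nlinarith
  have hs : (0:ℝ) < Real.sqrt (1 - u ^ 2) := Real.sqrt_pos.2 hpos
  have hsq : Real.sqrt (1 - u ^ 2) ^ 2 = 1 - u ^ 2 := Real.sq_sqrt hpos.le
  have ha : HasDerivAt Real.arcsin (1 / Real.sqrt (1 - u ^ 2)) u :=
    Real.hasDerivAt_arcsin (by linarith) (by linarith)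
  have hb : HasDerivAt (fun u : ℝ => u * Real.sqrt (1 - u ^ 2))
      (1 * Real.sqrt (1 - u ^ 2) + u * (-u / Real.sqrt (1 - u ^ 2))) u :=
    (hasDerivAt_id u).mul (sqrt_one_sub_sq_hasDerivAt h1 h2)
  have hc : HasDerivAt (fun u : ℝ => 3 * π * u) (3 * π) u := by
    simpa using (hasDerivAt_id u).const_mul (3 * π)
  have := ((ha.const_mul 6).add (hb.const_mul 4)).sub hc
  refine this.congr_deriv ?_
  field_simp
  nlinarith [hsq]

lemma Gfun_hasDerivAt {s : ℝ} (h1 : -1 < s) (h2 : s < 1) :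
    HasDerivAt Gfun (s * Hfun s) s := by
  have hpos : 0 < 1 - s ^ 2 := by nlinarith
  have hsp : (0:ℝ) < Real.sqrt (1 - s ^ 2) := Real.sqrt_pos.2 hpos
  have hsq : Real.sqrt (1 - s ^ 2) ^ 2 = 1 - s ^ 2 := Real.sq_sqrt hpos.le
  have ha : HasDerivAt Real.arcsin (1 / Real.sqrt (1 - s ^ 2)) s :=
    Real.hasDerivAt_arcsin (by linarith) (by linarith)
  have hp1 : HasDerivAt (fun s : ℝ => 3 * s ^ 2 - 1) (6 * s) s := by
    have := ((hasDerivAt_pow 2 s).const_mul 3).sub_const 1; simpa [mul_comm, mul_assoc, mul_left_comm] using this.congr_deriv (by ring)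
  have hp2 : HasDerivAt (fun s : ℝ => s * (1 + s ^ 2)) (1 * (1 + s ^ 2) + s * (2 * s)) s := by
    have := (hasDerivAt_id s).mul ((hasDerivAt_pow 2 s).const_add 1)
    exact this.congr_deriv (by simp)
  have hp3 : HasDerivAt (fun s : ℝ => π * s ^ 3) (π * (3 * s ^ 2)) s := by
    simpa using (hasDerivAt_pow 3 s).const_mul π
  have hterm1 : HasDerivAt (fun s : ℝ => (3 * s ^ 2 - 1) * Real.arcsin s)
      (6 * s * Real.arcsin s + (3 * s ^ 2 - 1) * (1 / Real.sqrt (1 - s ^ 2))) s := hp1.mul ha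
  have hterm2 : HasDerivAt (fun s : ℝ => s * (1 + s ^ 2) * Real.sqrt (1 - s ^ 2))
      ((1 * (1 + s ^ 2) + s * (2 * s)) * Real.sqrt (1 - s ^ 2)
        + s * (1 + s ^ 2) * (-s / Real.sqrt (1 - s ^ 2))) s :=
    hp2.mul (sqrt_one_sub_sq_hasDerivAt h1 h2)
  have := (hterm1.add hterm2).sub hp3
  refine this.congr_deriv ?_
  unfold Hfun
  field_simp
  nlinarith [hsq, sq_nonneg s, mul_pos hsp hsp]


-- arcsin lower bound: u + u^3/6 ≤ arcsin u  on [0,1)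
lemma arcsin_lb {u : ℝ} (h0 : 0 ≤ u) (h1 : u < 1) : u + u ^ 3 / 6 ≤ Real.arcsin u := by
  set f : ℝ → ℝ := fun u => Real.arcsin u - (u + u ^ 3 / 6) with hf
  have hmono : MonotoneOn f (Set.Ico (0:ℝ) 1) := by
    apply monotoneOn_of_deriv_nonneg (convex_Ico 0 1)
    · exact (Real.continuous_arcsin.sub (by continuity)).continuousOn
    · intro x hx
      rw [interior_Ico] at hx
      have hd : HasDerivAt f (1 / Real.sqrt (1 - x ^ 2) - (1 + 3 * x ^ 2 / 6)) x := by
        have ha := Real.hasDerivAt_arcsin (by linarith [hx.1] : x ≠ -1) (ne_of_lt hx.2)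
        have hb : HasDerivAt (fun u : ℝ => u + u ^ 3 / 6) (1 + 3 * x ^ 2 / 6) x := by
          have := (hasDerivAt_id x).add ((hasDerivAt_pow 3 x).div_const 6)
          exact this.congr_deriv (by simp)
        exact ha.sub hb
      exact hd.differentiableAt.differentiableWithinAt
    · intro x hx
      rw [interior_Ico] at hx
      have hpos : 0 < 1 - x ^ 2 := by nlinarith [hx.1, hx.2]
      have hsp : 0 < Real.sqrt (1 - x ^ 2) := Real.sqrt_pos.2 hpos
      have hsq : Real.sqrt (1 - x ^ 2) ^ 2 = 1 - x ^ 2 := Real.sq_sqrt hpos.le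
      have hd : HasDerivAt f (1 / Real.sqrt (1 - x ^ 2) - (1 + 3 * x ^ 2 / 6)) x := by
        have ha := Real.hasDerivAt_arcsin (by linarith [hx.1] : x ≠ -1) (ne_of_lt hx.2)
        have hb : HasDerivAt (fun u : ℝ => u + u ^ 3 / 6) (1 + 3 * x ^ 2 / 6) x := by
          have := (hasDerivAt_id x).add ((hasDerivAt_pow 3 x).div_const 6)
          exact this.congr_deriv (by simp)
        exact ha.sub hb
      rw [hd.deriv]
      have key : (1 + 3 * x ^ 2 / 6) * Real.sqrt (1 - x ^ 2) ≤ 1 := by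
        nlinarith [hsq, hsp, sq_nonneg x, sq_nonneg (x^2), hx.1,
          sq_nonneg ((1 + x^2/2) * Real.sqrt (1 - x^2) - 1)]
      have : 1 + 3 * x ^ 2 / 6 ≤ 1 / Real.sqrt (1 - x ^ 2) := by
        rw [le_div_iff₀ hsp]; exact key
      linarith
  have h00 : (0:ℝ) ∈ Set.Ico (0:ℝ) 1 := by constructor <;> norm_num
  have hu : u ∈ Set.Ico (0:ℝ) 1 := ⟨h0, h1⟩
  have := hmono h00 hu h0
  simp [hf, Real.arcsin_zero] at this
  linarith [this]



lemma le_of_sq_le_sq' {a b : ℝ} (ha : 0 ≤ a) (hb : 0 ≤ b) (h : a ^ 2 ≤ b ^ 2) : a ≤ b := by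
  nlinarith

lemma Hfun_nonneg_left {u : ℝ} (h0 : 0 ≤ u) (h1 : u ≤ 1 / 2) : 0 ≤ Hfun u := by
  have hlt : u < 1 := by linarith
  have hA := arcsin_lb h0 hlt
  have hge : (3:ℝ)/4 ≤ 1 - u ^ 2 := by nlinarith
  have hs : Real.sqrt (3/4) ≤ Real.sqrt (1 - u ^ 2) := Real.sqrt_le_sqrt hge
  have hs2 : (0.866:ℝ) ≤ Real.sqrt (3/4) := by
    rw [show (0.866:ℝ) = Real.sqrt (0.866 ^ 2) from (Real.sqrt_sq (by norm_num)).symm]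
    exact Real.sqrt_le_sqrt (by norm_num)
  have hpi : π < 3.141593 := Real.pi_lt_d6
  unfold Hfun
  nlinarith [mul_nonneg h0 (by linarith : (0:ℝ) ≤ Real.sqrt (1 - u ^ 2) - 0.866),
    sq_nonneg u, mul_nonneg h0 (sq_nonneg u)]

lemma Hfun_nonpos_right {u : ℝ} (h0 : 5/6 ≤ u) (h1 : u < 1) : Hfun u ≤ 0 := by
  have hu0 : (0:ℝ) ≤ u := by linarith
  have hpos : 0 < 1 - u ^ 2 := by nlinarith
  set c := Real.sqrt (1 - u ^ 2) with hc
  have hc0 : 0 < c := Real.sqrt_pos.2 hpos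
  have hcsq : c ^ 2 = 1 - u ^ 2 := Real.sq_sqrt hpos.le
  have hclt : c < 1 := by nlinarith [hcsq, hc0.le]
  -- arcsin u = π/2 - arcsin c
  have harc : Real.arcsin u = π / 2 - Real.arcsin c := by
    have h1' : Real.arccos u = Real.arcsin c := Real.arccos_eq_arcsin hu0
    have h2' : Real.arccos u = π / 2 - Real.arcsin u := Real.arccos_eq_pi_div_two_sub_arcsin u
    linarith [h1', h2']
  have hA : c + c ^ 3 / 6 ≤ Real.arcsin c := arcsin_lb hc0.le hclt
  -- key: 3π(1-u) ≤ c * (7 - u^2 - 4u)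
  have hpi : π < 3.141593 := Real.pi_lt_d6
  have hpi0 : 0 < π := Real.pi_pos
  have h56 : (0:ℝ) ≤ u - 5/6 := by linarith
  have h1u : (0:ℝ) ≤ 1 - u := by linarith
  have hq : 0 ≤ (1 + u) * (7 - u ^ 2 - 4 * u) ^ 2 - 9 * π ^ 2 * (1 - u) := by
    have hpisq : π ^ 2 < 9.8697 := by nlinarith [hpi, hpi0]
    nlinarith [h56, h1u, mul_nonneg h56 h1u, sq_nonneg (u - 5/6), sq_nonneg (1 - u),
      mul_nonneg (mul_nonneg h56 h56) h1u, mul_nonneg (mul_nonneg h1u h1u) h56,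
      mul_nonneg (mul_nonneg (mul_nonneg h56 h56) h56) h1u]
  have hkey : 3 * π * (1 - u) ≤ c * (7 - u ^ 2 - 4 * u) := by
    apply le_of_sq_le_sq' (by nlinarith) (by nlinarith)
    have hexp : (c * (7 - u ^ 2 - 4 * u)) ^ 2 = (1 - u ^ 2) * (7 - u ^ 2 - 4 * u) ^ 2 := by
      rw [mul_pow, hcsq]
    rw [hexp]
    nlinarith [mul_nonneg h1u hq]
  have hc3 : c ^ 3 = c * (1 - u ^ 2) := by linear_combination c * hcsq
  unfold Hfun
  rw [harc]
  nlinarith [hkey, hA, hc3, hc0.le]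

lemma Hfun_anti : AntitoneOn Hfun (Set.Icc (1/2 : ℝ) (5/6)) := by
  apply antitoneOn_of_deriv_nonpos (convex_Icc _ _)
  · unfold Hfun
    apply Continuous.continuousOn
    continuity
  · intro x hx
    rw [interior_Icc] at hx
    exact (Hfun_hasDerivAt (by linarith [hx.1]) (by linarith [hx.2])).differentiableAt.differentiableWithinAt
  · intro x hx
    rw [interior_Icc] at hx
    have hx1 : (1/2:ℝ) < x := hx.1
    have hx2 : x < 5/6 := hx.2
    have hpos : 0 < 1 - x ^ 2 := by nlinarith
    have hc0 : 0 < Real.sqrt (1 - x ^ 2) := Real.sqrt_pos.2 hpos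
    have hcsq : Real.sqrt (1 - x ^ 2) ^ 2 = 1 - x ^ 2 := Real.sq_sqrt hpos.le
    rw [(Hfun_hasDerivAt (by linarith) (by linarith)).deriv]
    have hpi : (3.141592:ℝ) < π := Real.pi_gt_d6
    have hnum : 10 - 8 * x ^ 2 ≤ 3 * π * Real.sqrt (1 - x ^ 2) := by
      apply le_of_sq_le_sq' (by nlinarith) (by positivity)
      have hexp : (3 * π * Real.sqrt (1 - x ^ 2)) ^ 2 = 9 * π ^ 2 * (1 - x ^ 2) := by
        rw [mul_pow, hcsq]; ring
      rw [hexp]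
      have hpisq : (9.8696:ℝ) < π ^ 2 := by nlinarith [hpi, Real.pi_pos]
      nlinarith [mul_nonneg (by nlinarith : (0:ℝ) ≤ x ^ 2 - 1/4) (by nlinarith : (0:ℝ) ≤ 25/36 - x ^ 2), Real.pi_pos]
    have hdiv : (10 - 8 * x ^ 2) / Real.sqrt (1 - x ^ 2) ≤ 3 * π := by
      rw [div_le_iff₀ hc0]
      linarith [hnum]
    linarith


lemma Gfun_nonneg {s : ℝ} (hs0 : 0 < s) (hs1 : s < 1) : 0 ≤ Gfun s := by
  -- find the zero s₀ of Hfun in [1/2, 5/6]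
  have hHcont : Continuous Hfun := by
    unfold Hfun
    continuity
  have hivt := intermediate_value_Icc' (by norm_num : (1/2:ℝ) ≤ 5/6) hHcont.continuousOn
  have h0mem : (0:ℝ) ∈ Set.Icc (Hfun (5/6)) (Hfun (1/2)) :=
    ⟨Hfun_nonpos_right le_rfl (by norm_num), Hfun_nonneg_left (by norm_num) le_rfl⟩
  obtain ⟨s₀, hs₀mem, hHs₀⟩ := hivt h0mem
  obtain ⟨hs₀l, hs₀r⟩ := hs₀mem
  have hsignP : ∀ u : ℝ, 0 ≤ u → u ≤ s₀ → 0 ≤ Hfun u := by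
    intro u hu0 hus
    rcases le_or_gt u (1/2) with h | h
    · exact Hfun_nonneg_left hu0 h
    · have := Hfun_anti ⟨h.le, le_trans hus hs₀r⟩ ⟨hs₀l, hs₀r⟩ hus
      rw [hHs₀] at this
      exact this
  have hsignN : ∀ u : ℝ, s₀ ≤ u → u < 1 → Hfun u ≤ 0 := by
    intro u hus hu1
    rcases le_or_gt (5/6) u with h | h
    · exact Hfun_nonpos_right h hu1
    · have := Hfun_anti ⟨hs₀l, hs₀r⟩ ⟨le_trans hs₀l hus, h.le⟩ hus
      rw [hHs₀] at this
      exact this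
  have hGcont : Continuous Gfun := by
    unfold Gfun
    continuity
  have hGmono : MonotoneOn Gfun (Set.Icc (0:ℝ) s₀) := by
    apply monotoneOn_of_deriv_nonneg (convex_Icc _ _) hGcont.continuousOn
    · intro x hx
      rw [interior_Icc] at hx
      exact (Gfun_hasDerivAt (by linarith [hx.1]) (by linarith [hx.2, hs₀r])).differentiableAt.differentiableWithinAt
    · intro x hx
      rw [interior_Icc] at hx
      rw [(Gfun_hasDerivAt (by linarith [hx.1]) (by linarith [hx.2, hs₀r])).deriv]
      exact mul_nonneg hx.1.le (hsignP x hx.1.le hx.2.le)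
  have hGanti : AntitoneOn Gfun (Set.Icc s₀ (1:ℝ)) := by
    apply antitoneOn_of_deriv_nonpos (convex_Icc _ _) hGcont.continuousOn
    · intro x hx
      rw [interior_Icc] at hx
      exact (Gfun_hasDerivAt (by linarith [hx.1, hs₀l]) (by linarith [hx.2])).differentiableAt.differentiableWithinAt
    · intro x hx
      rw [interior_Icc] at hx
      rw [(Gfun_hasDerivAt (by linarith [hx.1, hs₀l]) (by linarith [hx.2])).deriv]
      have hH := hsignN x hx.1.le hx.2
      nlinarith [hx.1, hs₀l]
  have hG0 : Gfun 0 = 0 := by simp [Gfun]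
  have hG1 : Gfun 1 = 0 := by
    simp [Gfun, Real.arcsin_one]
    ring
  rcases le_total s s₀ with h | h
  · have := hGmono ⟨le_rfl, by linarith⟩ ⟨hs0.le, h⟩ hs0.le
    rw [hG0] at this
    exact this
  · have := hGanti ⟨h, hs1.le⟩ ⟨by linarith, le_rfl⟩ hs1.le
    rw [hG1] at this
    exact this

theorem key_ineq (t : ℝ) (ht : t ∈ Set.Ioo (0:ℝ) 1) :
    t ^ (-(3/2) : ℝ) * (1 - t) ^ (-(1/2) : ℝ) *
        ((2 - 3 * t) * Real.arcsin (Real.sqrt (1 - t)) / Real.sqrt (1 - t) +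
          (2 - t) * Real.sqrt t - π * (1 - t)) ≥ 0 ∧
    (2 - 3 * t) * Real.arcsin (Real.sqrt (1 - t)) / Real.sqrt (1 - t) +
        (2 - t) * Real.sqrt t - π * (1 - t) ≥ 0 := by
  obtain ⟨ht0, ht1⟩ := ht
  set s := Real.sqrt (1 - t) with hsdef
  have hs0 : 0 < s := Real.sqrt_pos.2 (by linarith)
  have hs2 : s ^ 2 = 1 - t := Real.sq_sqrt (by linarith)
  have hs1 : s < 1 := by nlinarith [hs2, hs0.le]
  have ht' : t = 1 - s ^ 2 := by linarith
  have hsqt : Real.sqrt t = Real.sqrt (1 - s ^ 2) := by rw [← ht']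
  have hG : 0 ≤ Gfun s := Gfun_nonneg hs0 hs1
  have hid : Gfun s = s * ((2 - 3 * t) * Real.arcsin s / s + (2 - t) * Real.sqrt t - π * (1 - t)) := by
    unfold Gfun
    rw [hsqt, ht']
    field_simp
    ring
  have h2 : 0 ≤ (2 - 3 * t) * Real.arcsin s / s + (2 - t) * Real.sqrt t - π * (1 - t) := by
    rw [hid] at hG
    exact (mul_nonneg_iff_of_pos_left hs0).1 hG
  refine ⟨?_, h2⟩
  have hp1 : (0:ℝ) < t ^ (-(3/2) : ℝ) := Real.rpow_pos_of_pos ht0 _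
  have hp2 : (0:ℝ) < (1 - t) ^ (-(1/2) : ℝ) := Real.rpow_pos_of_pos (by linarith) _
  exact mul_nonneg (mul_nonneg hp1.le hp2.le) h2
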